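/- Let p^λ denote multiplication by the Schur function s_λ on Λ with the Hermitian form ⟨·,·⟩_k (defined by ⟨p_μ,p_ν⟩_k = δ_{μν} z(μ) ∏_i (t^{(1-k)μ_i} + t^{(3-k)μ_i} + ⋯ + t^{(k-1)μ_i})), and let q^λ be its adjoint. Then q^{(n)} ∘ p^{(m)} = Σ_{l ≥ 0} binom(k+l-1, l)_t · p^{(m-l)} ∘ q^{(n-l)}, where binom(k+l-1,l)_t is the balanced quantum binomial coefficient ∏_{i=1}^l (t^{k+l-i}-t^{-(k+l-i)})/(t^i - t^{-i}). -/

import Mathlib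

open MvPolynomial

noncomputable section

/-- The coefficient field `ℂ(t)`. -/
abbrev K : Type := RatFunc ℂ

/-- The variable `t`. -/
def tt : K := RatFunc.X

/-- The ring of symmetric functions, presented as polynomials in the
power sums `p_1, p_2, …` (the variable `X j` represents `p_j`). -/
abbrev SymFun : Type := MvPolynomial ℕ+ K

/-- `p_μ` for a partition `μ` given by its multiplicity function `d`
(`d j` = number of parts of `μ` equal to `j`). -/
def pPow (d : ℕ+ →₀ ℕ) : SymFun := monomial d 1

/-- `z(μ) = |Aut μ| ⬝ ∏_j μ_j`. -/
def zPart (d : ℕ+ →₀ ℕ) : ℕ := d.prod fun j m => m.factorial * (j : ℕ) ^ m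

/-- The Macdonald bilinear form with parameters `q`, `t`, defined on the
power sum basis by `(p_μ, p_ν) = δ_{μν} z(μ) ∏_j (1-q^{μ_j})/(1-t^{μ_j})`. -/
def macForm (q t : K) (f g : SymFun) : K :=
  ∑ d ∈ f.support ∪ g.support,
    coeff d f * coeff d g *
      ((zPart d : K) * d.prod fun j m => ((1 - q ^ (j : ℕ)) / (1 - t ^ (j : ℕ))) ^ m)

/-- The power sum `p_{i+1}` as an element of `SymFun`. -/
def pVar (i : ℕ) : SymFun := X (⟨i + 1, Nat.succ_pos i⟩ : ℕ+)

/-- The complete homogeneous symmetric function `h_n`, via Newton's identity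
`n h_n = ∑_{i=1}^n p_i h_{n-i}`. -/
def hSym : ℕ → SymFun
  | 0 => 1
  | n + 1 =>
    ((n + 1 : K))⁻¹ • ∑ i ∈ Finset.range (n + 1), pVar i * hSym (n - i)
  decreasing_by omega

/-- `h_n` for an integer index, with `h_n = 0` for `n < 0`. -/
def hZ (n : ℤ) : SymFun := if 0 ≤ n then hSym n.toNat else 0

/-- Skew Schur function via the Jacobi–Trudi determinant
`s_{λ/μ} = det (h_{λ_i - μ_j - i + j})`. -/
def skewSchur (lam mu : List ℕ) : SymFun :=
  Matrix.det (Matrix.of fun i j : Fin (max lam.length mu.length) =>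
    hZ ((lam.getD i 0 : ℤ) - (mu.getD j 0 : ℤ) - (i : ℤ) + (j : ℤ)))

/-- Schur function. -/
def schur (lam : List ℕ) : SymFun := skewSchur lam []

/-- A list of naturals presents a partition iff it is weakly decreasing with
positive entries. -/
def IsPartList (l : List ℕ) : Prop := l.Pairwise (· ≥ ·) ∧ ∀ x ∈ l, 0 < x


/-- The (weighted) degree of `p_μ`, i.e. `|μ| = ∑_j j ⬝ d j`. -/
def wdeg (d : ℕ+ →₀ ℕ) : ℕ := d.sum fun j m => (j : ℕ) * m

/-- `z(μ) ∏_i (t^{(1-k)μ_i} + t^{(3-k)μ_i} + ⋯ + t^{(k-1)μ_i})`. -/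
def hermWeight (k : ℕ) (d : ℕ+ →₀ ℕ) : K :=
  (zPart d : K) *
    d.prod fun j m =>
      (∑ s ∈ Finset.range k, tt ^ ((2 * (s : ℤ) + 1 - (k : ℤ)) * (j : ℕ))) ^ m

/-- The principal specialization sending `p_j` to
`(t^{1-k})^j + (t^{3-k})^j + ⋯ + (t^{k-1})^j`, i.e. evaluation of a symmetric
function at the `k` variables `t^{1-k}, t^{3-k}, …, t^{k-1}`. -/
def principalEval (k : ℕ) : SymFun →ₐ[K] K :=
  aeval fun j : ℕ+ =>
    ∑ s ∈ Finset.range k, tt ^ ((2 * (s : ℤ) + 1 - (k : ℤ)) * (j : ℕ))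

/-- The bilinear form `⟨f,g⟩_k` of the paper, on elements with `t`-free
coefficients (such as Schur functions); on the power-sum basis it is
`⟨p_μ,p_ν⟩_k = δ_{μν} z(μ) ∏_i (t^{(1-k)μ_i} + t^{(3-k)μ_i} + ⋯ + t^{(k-1)μ_i})`. -/
def hermFormB (k : ℕ) (f g : SymFun) : K :=
  ∑ d ∈ f.support ∪ g.support, coeff d f * coeff d g * hermWeight k d


namespace Stmt17

instance : CharZero K :=
  charZero_of_injective_algebraMap (RatFunc.algebraMap_injective ℂ)

lemma tt_ne_zero : tt ≠ 0 := RatFunc.X_ne_zero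

/-- index of the variable `p_{i+1}` -/
def pIdx (i : ℕ) : ℕ+ := ⟨i + 1, Nat.succ_pos i⟩

lemma pVar_eq (i : ℕ) : pVar i = X (pIdx i) := rfl

/-- `a_j = p_j` evaluated at the `k` principal variables. -/
def aK (k : ℕ) (j : ℕ) : K :=
  ∑ s ∈ Finset.range k, tt ^ ((2 * (s : ℤ) + 1 - (k : ℤ)) * (j : ℤ))

/-- balanced q-binomial -/
def Cq (k l : ℕ) : K :=
  ∏ i ∈ Finset.range l,
    (tt ^ ((k : ℤ) + l - (i + 1)) - tt ^ (-((k : ℤ) + l - (i + 1)))) /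
      (tt ^ ((i : ℤ) + 1) - tt ^ (-((i : ℤ) + 1)))

def Bq (k l : ℕ) : K := principalEval k (hSym l)

/- ---------- basic nonvanishing facts ---------- -/

lemma pow_sub_one_ne_zero {mth : ℕ} (h : 1 ≤ mth) : (tt ^ mth - 1 : K) ≠ 0 := by
  have heq : tt ^ mth - 1 = algebraMap (Polynomial ℂ) K (Polynomial.X ^ mth - 1) := by
    simp [tt, RatFunc.algebraMap_X]
  rw [heq]
  intro hcon
  have h2 : (Polynomial.X ^ mth - 1 : Polynomial ℂ) = 0 :=
    RatFunc.algebraMap_injective ℂ (by simpa using hcon)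
  have h3 := congrArg (Polynomial.eval 0) h2
  rw [Polynomial.eval_sub, Polynomial.eval_pow, Polynomial.eval_X, Polynomial.eval_one,
    zero_pow (by omega : mth ≠ 0)] at h3
  simp at h3

lemma Sb_ne_zero {a : ℤ} (ha : 1 ≤ a) : tt ^ a - tt ^ (-a) ≠ 0 := by
  have h1 : tt ^ a - tt ^ (-a) = tt ^ (-a) * (tt ^ (2 * a) - 1) := by
    rw [mul_sub, ← zpow_add₀ tt_ne_zero]
    ring_nf
  rw [h1]
  refine mul_ne_zero (zpow_ne_zero _ tt_ne_zero) ?_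
  have h2 : tt ^ (2 * a) = tt ^ ((2 * a).toNat) := by
    rw [← zpow_natCast]; congr 1; omega
  rw [h2]
  exact pow_sub_one_ne_zero (by omega)

lemma aK_ne_zero {k j : ℕ} (hk : 1 ≤ k) : aK k j ≠ 0 := by
  have hfac : aK k j
      = tt ^ ((1 - (k : ℤ)) * j) *
        algebraMap (Polynomial ℂ) K (∑ s ∈ Finset.range k, Polynomial.X ^ (2 * s * j)) := by
    rw [map_sum, Finset.mul_sum]
    refine Finset.sum_congr rfl fun s _ => ?_
    have algX : algebraMap (Polynomial ℂ) K Polynomial.X = tt := RatFunc.algebraMap_X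
    rw [map_pow, algX, ← zpow_natCast tt (2 * s * j), ← zpow_add₀ tt_ne_zero]
    congr 1
    push_cast
    ring
  rw [hfac]
  refine mul_ne_zero (zpow_ne_zero _ tt_ne_zero) ?_
  rw [Ne, ← map_zero (algebraMap (Polynomial ℂ) K),
    (RatFunc.algebraMap_injective ℂ).eq_iff]
  intro hcon
  have h3 := congrArg (Polynomial.eval 1) hcon
  simp [Polynomial.eval_finset_sum] at h3
  have : k = 0 := by exact_mod_cast h3
  omega

lemma hermWeight_ne_zero {k : ℕ} (hk : 1 ≤ k) (d : ℕ+ →₀ ℕ) : hermWeight k d ≠ 0 := by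
  unfold hermWeight
  refine mul_ne_zero ?_ ?_
  · rw [Nat.cast_ne_zero]
    unfold zPart
    rw [Finsupp.prod]
    have : 0 < ∏ j ∈ d.support, (d j).factorial * (j : ℕ) ^ (d j) :=
      Finset.prod_pos fun j _ => Nat.mul_pos (Nat.factorial_pos _) (Nat.pow_pos j.2)
    exact this.ne'
  · rw [Finsupp.prod]
    refine Finset.prod_ne_zero_iff.mpr fun j _ => pow_ne_zero _ ?_
    exact aK_ne_zero hk (j := (j : ℕ))

/- ---------- form lemmas ---------- -/

lemma hermFormB_eq_sum (k : ℕ) {f g : SymFun} {S : Finset (ℕ+ →₀ ℕ)}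
    (hS : f.support ∩ g.support ⊆ S) :
    hermFormB k f g = ∑ d ∈ S, coeff d f * coeff d g * hermWeight k d := by
  classical
  have key : ∀ T : Finset (ℕ+ →₀ ℕ), f.support ∩ g.support ⊆ T →
      ∑ d ∈ T, coeff d f * coeff d g * hermWeight k d
        = ∑ d ∈ T ∪ S ∪ (f.support ∪ g.support),
            coeff d f * coeff d g * hermWeight k d := by
    intro T hT
    refine Finset.sum_subset (Finset.subset_union_left.trans Finset.subset_union_left)
      fun d _ hd => ?_
    have : coeff d f = 0 ∨ coeff d g = 0 := by
      by_contra hcon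
      push_neg at hcon
      exact hd (hT (Finset.mem_inter.mpr ⟨mem_support_iff.mpr hcon.1, mem_support_iff.mpr hcon.2⟩))
    rcases this with h | h <;> rw [h] <;> ring
  have h1 := key (f.support ∪ g.support) Finset.inter_subset_union
  have h2 := key S hS
  unfold hermFormB
  rw [h1, h2]
  congr 1
  ext x
  simp only [Finset.mem_union]
  tauto

lemma hermFormB_comm (k : ℕ) (f g : SymFun) : hermFormB k f g = hermFormB k g f := by
  unfold hermFormB
  rw [Finset.union_comm]
  exact Finset.sum_congr rfl fun d _ => by ring

lemma hermFormB_monomial_right (k : ℕ) (f : SymFun) (d : ℕ+ →₀ ℕ) :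
    hermFormB k f (monomial d 1) = coeff d f * hermWeight k d := by
  classical
  rw [hermFormB_eq_sum k (S := {d})
    (Finset.inter_subset_right.trans (support_monomial_subset))]
  rw [Finset.sum_singleton, coeff_monomial, if_pos rfl, mul_one]

lemma hermFormB_add_left (k : ℕ) (f g h : SymFun) :
    hermFormB k (f + g) h = hermFormB k f h + hermFormB k g h := by
  classical
  set S := (f + g).support ∪ f.support ∪ g.support ∪ h.support with hS
  have h1 : hermFormB k (f + g) h = ∑ d ∈ S, coeff d (f + g) * coeff d h * hermWeight k d :=
    hermFormB_eq_sum k (Finset.inter_subset_left.trans (by intro x hx; simp only [hS, Finset.mem_union]; tauto))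
  have h2 : hermFormB k f h = ∑ d ∈ S, coeff d f * coeff d h * hermWeight k d :=
    hermFormB_eq_sum k (Finset.inter_subset_left.trans (by intro x hx; simp only [hS, Finset.mem_union]; tauto))
  have h3 : hermFormB k g h = ∑ d ∈ S, coeff d g * coeff d h * hermWeight k d :=
    hermFormB_eq_sum k (Finset.inter_subset_left.trans (by intro x hx; simp only [hS, Finset.mem_union]; tauto))
  rw [h1, h2, h3, ← Finset.sum_add_distrib]
  exact Finset.sum_congr rfl fun d _ => by rw [coeff_add]; ring

lemma hermFormB_smul_left (k : ℕ) (c : K) (f h : SymFun) :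
    hermFormB k (c • f) h = c * hermFormB k f h := by
  classical
  set S := (c • f).support ∪ f.support ∪ h.support with hS
  have h1 : hermFormB k (c • f) h = ∑ d ∈ S, coeff d (c • f) * coeff d h * hermWeight k d :=
    hermFormB_eq_sum k (Finset.inter_subset_left.trans (by intro x hx; simp only [hS, Finset.mem_union]; tauto))
  have h2 : hermFormB k f h = ∑ d ∈ S, coeff d f * coeff d h * hermWeight k d :=
    hermFormB_eq_sum k (Finset.inter_subset_left.trans (by intro x hx; simp only [hS, Finset.mem_union]; tauto))
  rw [h1, h2, Finset.mul_sum]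
  exact Finset.sum_congr rfl fun d _ => by rw [coeff_smul]; simp [smul_eq_mul]; ring

lemma hermFormB_zero_left (k : ℕ) (h : SymFun) : hermFormB k 0 h = 0 := by
  have := hermFormB_smul_left k 0 0 h
  simpa using this

lemma hermFormB_sum_left (k : ℕ) {ι : Type*} (s : Finset ι) (F : ι → SymFun) (h : SymFun) :
    hermFormB k (∑ i ∈ s, F i) h = ∑ i ∈ s, hermFormB k (F i) h := by
  classical
  induction s using Finset.induction_on with
  | empty => simpa using hermFormB_zero_left k h
  | insert _ _ hx ih =>
      rw [Finset.sum_insert hx, Finset.sum_insert hx, hermFormB_add_left, ih]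

lemma hermFormB_add_right (k : ℕ) (f g h : SymFun) :
    hermFormB k f (g + h) = hermFormB k f g + hermFormB k f h := by
  rw [hermFormB_comm, hermFormB_add_left, hermFormB_comm k g f, hermFormB_comm k h f]

lemma ext_of_hermFormB {k : ℕ} (hk : 1 ≤ k) {f g : SymFun}
    (h : ∀ u : SymFun, hermFormB k f u = hermFormB k g u) : f = g := by
  ext d
  have := h (monomial d 1)
  rw [hermFormB_monomial_right, hermFormB_monomial_right] at this
  exact mul_right_cancel₀ (hermWeight_ne_zero hk d) this

/- ---------- more form lemmas ---------- -/

lemma hermFormB_smul_right (k : ℕ) (c : K) (f h : SymFun) :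
    hermFormB k f (c • h) = c * hermFormB k f h := by
  rw [hermFormB_comm, hermFormB_smul_left, hermFormB_comm k h f]

lemma hermFormB_monomial_monomial (k : ℕ) (d e : ℕ+ →₀ ℕ) (c c' : K) :
    hermFormB k (monomial d c) (monomial e c')
      = if d = e then c * c' * hermWeight k d else 0 := by
  have h1 : (monomial d c : SymFun) = c • monomial d 1 := by
    rw [smul_monomial, smul_eq_mul, mul_one]
  have h2 : (monomial e c' : SymFun) = c' • monomial e 1 := by
    rw [smul_monomial, smul_eq_mul, mul_one]
  rw [h1, h2, hermFormB_smul_left, hermFormB_smul_right, hermFormB_monomial_right,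
    coeff_monomial]
  split_ifs with h
  · subst h; ring
  · ring

/-- peeling one index off a Finsupp product -/
lemma prod_peel {N : Type*} [CommMonoid N] (e : ℕ+ →₀ ℕ) (j : ℕ+) (g : ℕ+ → ℕ → N)
    (hg : g j 0 = 1) : e.prod g = g j (e j) * (e.erase j).prod g := by
  by_cases hj : j ∈ e.support
  · exact (Finsupp.mul_prod_erase e j g hj).symm
  · rw [Finsupp.notMem_support_iff.mp hj, hg, one_mul,
      Finsupp.erase_of_notMem_support hj]

lemma erase_add_single (e : ℕ+ →₀ ℕ) (j : ℕ+) :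
    (e + Finsupp.single j 1).erase j = e.erase j := by
  ext a
  by_cases ha : a = j
  · subst ha; simp
  · simp [Finsupp.erase_ne ha, Finsupp.single_apply, Ne.symm ha, ha]

lemma hermWeight_add_single (k : ℕ) (e : ℕ+ →₀ ℕ) (j : ℕ+) :
    hermWeight k (e + Finsupp.single j 1)
      = hermWeight k e * (((e j : K) + 1) * ((j : ℕ) : K) * aK k (j : ℕ)) := by
  unfold hermWeight zPart
  have happ : (e + Finsupp.single j 1 : ℕ+ →₀ ℕ) j = e j + 1 := by
    rw [Finsupp.add_apply, Finsupp.single_eq_same]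
  rw [prod_peel (e + Finsupp.single j 1) j _ (by simp),
      prod_peel e j (fun j m => m.factorial * (j : ℕ) ^ m) (by simp),
      prod_peel (e + Finsupp.single j 1) j _ (by simp),
      prod_peel e j _ (by simp),
      erase_add_single, happ]
  have haK : (∑ s ∈ Finset.range k, tt ^ ((2 * (s : ℤ) + 1 - (k : ℤ)) * ((j : ℕ) : ℕ)))
      = aK k (j : ℕ) := rfl
  rw [haK]
  push_cast [Nat.factorial_succ, pow_succ]
  ring

/- ---------- the operator D ---------- -/

/-- adjoint of multiplication by `p_{i+1}`. -/
def Dop (k : ℕ) (i : ℕ) (f : SymFun) : SymFun :=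
  (aK k (i + 1) * ((i + 1 : ℕ) : K)) • pderiv (pIdx i) f

lemma Dop_add (k i : ℕ) (f g : SymFun) : Dop k i (f + g) = Dop k i f + Dop k i g := by
  unfold Dop; rw [map_add, smul_add]

lemma Dop_smul (k i : ℕ) (c : K) (f : SymFun) : Dop k i (c • f) = c • Dop k i f := by
  unfold Dop; rw [Derivation.map_smul, smul_comm]

lemma Dop_sum (k i : ℕ) {ι : Type*} (s : Finset ι) (F : ι → SymFun) :
    Dop k i (∑ a ∈ s, F a) = ∑ a ∈ s, Dop k i (F a) := by
  unfold Dop; rw [map_sum, Finset.smul_sum]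

lemma Dop_adjoint (k : ℕ) (i : ℕ) (f g : SymFun) :
    hermFormB k (Dop k i f) g = hermFormB k f (pVar i * g) := by
  induction f using MvPolynomial.induction_on' with
  | add p q hp hq => rw [Dop_add, hermFormB_add_left, hermFormB_add_left, hp, hq]
  | monomial d c =>
    induction g using MvPolynomial.induction_on' with
    | add p q hp hq =>
        rw [hermFormB_add_right, mul_add, hermFormB_add_right, hp, hq]
    | monomial e c' =>
        have hX : (pVar i : SymFun) * monomial e c'
            = monomial (e + Finsupp.single (pIdx i) 1) c' := by
          rw [pVar_eq, X, monomial_mul, one_mul,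
            add_comm e (Finsupp.single (pIdx i) 1)]
        have hD : Dop k i (monomial d c)
            = (aK k (i + 1) * ((i + 1 : ℕ) : K)) •
                monomial (d - Finsupp.single (pIdx i) 1) (c * (d (pIdx i) : K)) := by
          unfold Dop; rw [pderiv_monomial]
        rw [hX, hD, hermFormB_smul_left, hermFormB_monomial_monomial,
          hermFormB_monomial_monomial]
        by_cases hde : d = e + Finsupp.single (pIdx i) 1
        · subst hde
          have hsub : e + Finsupp.single (pIdx i) 1 - Finsupp.single (pIdx i) 1 = e := by
            ext a
            rw [Finsupp.tsub_apply, Finsupp.add_apply]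
            omega
          have happ : (e + Finsupp.single (pIdx i) 1 : ℕ+ →₀ ℕ) (pIdx i) = e (pIdx i) + 1 := by
            rw [Finsupp.add_apply, Finsupp.single_eq_same]
          rw [hsub, if_pos rfl, if_pos rfl, happ, hermWeight_add_single]
          have h5 : ((pIdx i : ℕ) : K) = ((i + 1 : ℕ) : K) := rfl
          have h6 : aK k ((pIdx i : ℕ)) = aK k (i + 1) := rfl
          rw [h5, h6]
          push_cast
          ring
        · rw [if_neg hde]
          by_cases hde2 : d - Finsupp.single (pIdx i) 1 = e
          · rw [if_pos hde2]
            have hzero : d (pIdx i) = 0 := by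
              by_contra hz
              apply hde
              ext a
              have := congrFun (congrArg (fun u : ℕ+ →₀ ℕ => (u : ℕ+ → ℕ)) hde2) a
              simp only [Finsupp.coe_tsub, Pi.sub_apply] at this
              by_cases ha : a = pIdx i
              · subst ha
                simp only [Finsupp.coe_add, Pi.add_apply, Finsupp.single_eq_same] at this ⊢
                omega
              · simp only [Finsupp.coe_add, Pi.add_apply,
                  Finsupp.single_apply, if_neg (Ne.symm ha)] at this ⊢
                simpa [Finsupp.single_apply, Ne.symm ha] using this
            rw [hzero]
            push_cast
            ring
          · rw [if_neg hde2, mul_zero]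

/- ---------- Newton identities ---------- -/

lemma hZ_natCast (n : ℕ) : hZ (n : ℤ) = hSym n := by
  unfold hZ
  rw [if_pos (Int.natCast_nonneg n), Int.toNat_natCast]

lemma hZ_neg {c : ℤ} (hc : c < 0) : hZ c = 0 := by
  unfold hZ
  rw [if_neg (by omega)]

lemma newton_nat (n : ℕ) :
    ((n : K) + 1) • hSym (n + 1) = ∑ i ∈ Finset.range (n + 1), pVar i * hSym (n - i) := by
  rw [hSym, smul_smul]
  have h0 : ((n : K) + 1) ≠ 0 := Nat.cast_add_one_ne_zero n
  rw [show ((n : K) + 1) * ((n : K) + 1)⁻¹ = 1 from mul_inv_cancel₀ h0, one_smul]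

lemma newton_general (N : ℕ) (c : ℤ) (hc : c ≤ N + 1) :
    ∑ i ∈ Finset.range (N + 1), pVar i * hZ (c - 1 - i) = (c : K) • hZ c := by
  by_cases hc0 : c ≤ 0
  · rw [Finset.sum_eq_zero fun i _ => by rw [hZ_neg (by omega), mul_zero]]
    rcases lt_or_eq_of_le hc0 with h | h
    · rw [hZ_neg h, smul_zero]
    · rw [h]; simp
  · push_neg at hc0
    obtain ⟨ν, rfl⟩ : ∃ ν : ℕ, c = (ν : ℤ) + 1 := ⟨(c - 1).toNat, by omega⟩
    have hν : ν ≤ N := by omega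
    have h1 : ∑ i ∈ Finset.range (N + 1), pVar i * hZ ((ν : ℤ) + 1 - 1 - i)
        = ∑ i ∈ Finset.range (ν + 1), pVar i * hZ ((ν : ℤ) + 1 - 1 - i) := by
      rw [eq_comm]
      refine Finset.sum_subset (Finset.range_subset_range.mpr (by omega)) ?_
      intro i hi hni
      rw [hZ_neg (by simp only [Finset.mem_range] at hi hni; omega), mul_zero]
    have h2 : ∑ i ∈ Finset.range (ν + 1), pVar i * hZ ((ν : ℤ) + 1 - 1 - i)
        = ∑ i ∈ Finset.range (ν + 1), pVar i * hSym (ν - i) :=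
      Finset.sum_congr rfl fun i hi => by
        have hi' := Finset.mem_range.mp hi
        rw [show (ν : ℤ) + 1 - 1 - i = ((ν - i : ℕ) : ℤ) by omega, hZ_natCast]
    rw [h1, h2, ← newton_nat, show ((ν : ℤ) + 1) = (((ν + 1 : ℕ)) : ℤ) by omega, hZ_natCast]
    congr 1

lemma pIdx_inj {i j : ℕ} (h : pIdx i = pIdx j) : i = j := by
  have := congrArg (fun u : ℕ+ => (u : ℕ)) h
  simpa [pIdx] using this

lemma pderiv_hSym (i : ℕ) (m : ℕ) :
    ((i : K) + 1) • (pderiv (pIdx i) (hSym m) : SymFun) = hZ ((m : ℤ) - (i + 1)) := by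
  induction m using Nat.strong_induction_on with
  | _ m IH =>
    match m with
    | 0 =>
        rw [hSym, Derivation.map_one_eq_zero, smul_zero, hZ_neg (by omega)]
    | ν + 1 =>
        have hν : ((ν : K) + 1) ≠ 0 := Nat.cast_add_one_ne_zero ν
        refine smul_right_injective SymFun hν ?_
        calc ((ν : K) + 1) • (((i : K) + 1) • (pderiv (pIdx i) (hSym (ν + 1)) : SymFun))
            = ((i : K) + 1) • (pderiv (pIdx i) (((ν : K) + 1) • hSym (ν + 1)) : SymFun) := by
              rw [smul_comm, Derivation.map_smul]
          _ = ((i : K) + 1) •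
                ∑ j ∈ Finset.range (ν + 1),
                  ((pderiv (pIdx i) (pVar j) : SymFun) * hSym (ν - j)
                    + pVar j * (pderiv (pIdx i) (hSym (ν - j)) : SymFun)) := by
              rw [newton_nat, map_sum]
              congr 1
              exact Finset.sum_congr rfl fun j _ => pderiv_mul
          _ = (∑ j ∈ Finset.range (ν + 1),
                  ((i : K) + 1) • ((pderiv (pIdx i) (pVar j) : SymFun) * hSym (ν - j)))
              + ∑ j ∈ Finset.range (ν + 1),
                  pVar j * (((i : K) + 1) • (pderiv (pIdx i) (hSym (ν - j)) : SymFun)) := by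
              rw [Finset.smul_sum, ← Finset.sum_add_distrib]
              refine Finset.sum_congr rfl fun j _ => ?_
              rw [smul_add, mul_smul_comm]
          _ = (if i ∈ Finset.range (ν + 1) then ((i : K) + 1) • hSym (ν - i) else 0)
              + ((((ν : ℤ) - (i : ℤ) : ℤ) : K) • hZ ((ν : ℤ) - i)) := by
              congr 1
              · rw [← Finset.sum_ite_eq' (Finset.range (ν + 1)) i
                  (fun j => ((i : K) + 1) • hSym (ν - j))]
                refine Finset.sum_congr rfl fun j hj => ?_
                by_cases hij : j = i
                · subst hij
                  rw [if_pos rfl, pVar_eq, pderiv_X_self, one_mul]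
                · have hx : (pderiv (pIdx i) (X (pIdx j)) : SymFun) = 0 :=
                    pderiv_X_of_ne (by intro hc; exact hij (by have := pIdx_inj hc; omega))
                  rw [if_neg hij, pVar_eq, hx, zero_mul, smul_zero]
              · rw [← newton_general ν ((ν : ℤ) - i) (by omega)]
                refine Finset.sum_congr rfl fun j hj => ?_
                have hj' := Finset.mem_range.mp hj
                rw [IH (ν - j) (by omega),
                  show ((ν - j : ℕ) : ℤ) - ((i : ℤ) + 1) = ((ν : ℤ) - i) - 1 - j by omega]
          _ = ((ν : K) + 1) • hZ (((ν : ℤ) + 1) - (i + 1)) := by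
              by_cases hiν : i ≤ ν
              · rw [if_pos (Finset.mem_range.mpr (by omega)),
                  show ((ν : ℤ) - i) = ((ν - i : ℕ) : ℤ) by omega, hZ_natCast,
                  show ((ν : ℤ) + 1) - ((i : ℤ) + 1) = ((ν - i : ℕ) : ℤ) by omega, hZ_natCast,
                  ← add_smul]
                congr 1
                push_cast [show ((ν - i : ℕ) : ℤ) = (ν : ℤ) - i by omega]
                ring
              · rw [if_neg (by simp only [Finset.mem_range]; omega), hZ_neg (by omega),
                  hZ_neg (by omega), smul_zero, smul_zero, zero_add]

lemma pderiv_hZ (i : ℕ) (c : ℤ) :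
    ((i : K) + 1) • (pderiv (pIdx i) (hZ c) : SymFun) = hZ (c - (i + 1)) := by
  by_cases hc : 0 ≤ c
  · obtain ⟨m, rfl⟩ : ∃ m : ℕ, c = m := ⟨c.toNat, by omega⟩
    rw [hZ_natCast, pderiv_hSym]
  · rw [hZ_neg (by omega), map_zero, smul_zero, hZ_neg (by omega)]

lemma Dop_mul_hZ (k i : ℕ) (c : ℤ) (f : SymFun) :
    Dop k i (hZ c * f) = hZ c * Dop k i f + aK k (i + 1) • (hZ (c - (i + 1)) * f) := by
  unfold Dop
  rw [pderiv_mul, smul_add, add_comm]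
  congr 1
  · rw [mul_smul_comm]
  · rw [mul_smul, ← smul_mul_assoc, ← pderiv_hZ i c, Nat.cast_add_one]

/- ---------- more form corollaries ---------- -/

lemma hermFormB_zero_right (k : ℕ) (f : SymFun) : hermFormB k f 0 = 0 := by
  rw [hermFormB_comm]; exact hermFormB_zero_left k f

lemma hermFormB_sum_right (k : ℕ) {ι : Type*} (s : Finset ι) (f : SymFun) (F : ι → SymFun) :
    hermFormB k f (∑ i ∈ s, F i) = ∑ i ∈ s, hermFormB k f (F i) := by
  rw [hermFormB_comm, hermFormB_sum_left]
  exact Finset.sum_congr rfl fun i _ => hermFormB_comm k (F i) f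

lemma hSym_zero : hSym 0 = 1 := by rw [hSym]

lemma hZ_zero : hZ 0 = 1 := by
  rw [show (0 : ℤ) = ((0 : ℕ) : ℤ) from rfl, hZ_natCast, hSym_zero]

lemma Dop_zero (k i : ℕ) : Dop k i 0 = 0 := by
  unfold Dop; rw [map_zero, smul_zero]

/- ---------- generic convolution reindexing ---------- -/

lemma conv {M : Type*} [AddCommMonoid M] [Module K M] (g : ℕ → ℕ → K) (F : ℤ → M) (N : ℕ)
    (hF : ∀ c : ℤ, c < 0 → F c = 0) :
    ∑ i ∈ Finset.range (N + 1), ∑ l ∈ Finset.range (N + 1), g i l • F ((N : ℤ) - i - l)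
      = ∑ r ∈ Finset.range (N + 2),
          (∑ i ∈ Finset.range r, g i (r - 1 - i)) • F ((N : ℤ) + 1 - r) := by
  classical
  rw [← Finset.sum_product']
  rw [← Finset.sum_filter_add_sum_filter_not (Finset.range (N + 1) ×ˢ Finset.range (N + 1))
      (fun p => p.1 + p.2 ≤ N)]
  have hzero : ∑ p ∈ (Finset.range (N + 1) ×ˢ Finset.range (N + 1)).filter
      (fun p => ¬ p.1 + p.2 ≤ N), g p.1 p.2 • F ((N : ℤ) - p.1 - p.2) = 0 := by
    refine Finset.sum_eq_zero fun p hp => ?_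
    rw [Finset.mem_filter] at hp
    rw [hF _ (by have := hp.2; omega), smul_zero]
  rw [hzero, add_zero]
  have hR : ∀ r ∈ Finset.range (N + 2),
      (∑ i ∈ Finset.range r, g i (r - 1 - i)) • F ((N : ℤ) + 1 - r)
        = ∑ i ∈ Finset.range r, g i (r - 1 - i) • F ((N : ℤ) + 1 - r) := by
    intro r _
    rw [Finset.sum_smul]
  rw [Finset.sum_congr rfl hR, ← Finset.sum_sigma (Finset.range (N + 2)) (fun r => Finset.range r)
      (fun q => g q.2 (q.1 - 1 - q.2) • F ((N : ℤ) + 1 - q.1))]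
  refine Finset.sum_nbij' (fun p => ⟨p.1 + p.2 + 1, p.1⟩) (fun q => (q.2, q.1 - 1 - q.2))
    ?_ ?_ ?_ ?_ ?_
  · intro p hp
    rw [Finset.mem_filter, Finset.mem_product, Finset.mem_range, Finset.mem_range] at hp
    rw [Finset.mem_sigma, Finset.mem_range, Finset.mem_range]
    dsimp only
    omega
  · intro q hq
    rw [Finset.mem_sigma, Finset.mem_range, Finset.mem_range] at hq
    rw [Finset.mem_filter, Finset.mem_product, Finset.mem_range, Finset.mem_range]
    dsimp only
    omega
  · intro p hp
    rw [Finset.mem_filter, Finset.mem_product, Finset.mem_range, Finset.mem_range] at hp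
    obtain ⟨a, b⟩ := p
    dsimp only
    rw [show a + b + 1 - 1 - a = b by omega]
  · intro q hq
    rw [Finset.mem_sigma, Finset.mem_range, Finset.mem_range] at hq
    obtain ⟨r, i⟩ := q
    dsimp only at hq ⊢
    rw [show i + (r - 1 - i) + 1 = r by omega]
  · intro p hp
    rw [Finset.mem_filter, Finset.mem_product, Finset.mem_range, Finset.mem_range] at hp
    have h1 : p.1 + p.2 + 1 - 1 - p.1 = p.2 := by omega
    have h2 : (N : ℤ) - p.1 - p.2 = (N : ℤ) + 1 - ((p.1 + p.2 + 1 : ℕ) : ℤ) := by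
      push_cast; ring
    rw [h1, h2]

/- ---------- adjoint operator lemmas ---------- -/

section AdjLemmas

variable {k : ℕ} (hk : 1 ≤ k) (adj : ℤ → SymFun →ₗ[K] SymFun)
  (hadj : ∀ (j : ℤ) (g h : SymFun), hermFormB k (adj j g) h = hermFormB k g (hZ j * h))

include hk hadj

lemma adj_neg {c : ℤ} (hc : c < 0) (f : SymFun) : adj c f = 0 := by
  refine ext_of_hermFormB hk fun u => ?_
  rw [hadj, hZ_neg hc, zero_mul, hermFormB_zero_right, hermFormB_zero_left]

lemma adj_zero (f : SymFun) : adj 0 f = f := by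
  refine ext_of_hermFormB hk fun u => ?_
  rw [hadj, hZ_zero, one_mul]

lemma adj_rec (ν : ℕ) (f : SymFun) :
    ((ν : K) + 1) • adj ((ν : ℤ) + 1) f
      = ∑ i ∈ Finset.range (ν + 1), Dop k i (adj ((ν : ℤ) - i) f) := by
  refine ext_of_hermFormB hk fun u => ?_
  rw [hermFormB_smul_left, hadj, hermFormB_sum_left]
  have hR : ∀ i ∈ Finset.range (ν + 1),
      hermFormB k (Dop k i (adj ((ν : ℤ) - i) f)) u
        = hermFormB k f ((pVar i * hSym (ν - i)) * u) := by
    intro i hi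
    have hi' := Finset.mem_range.mp hi
    rw [Dop_adjoint, hadj, show ((ν : ℤ) - i) = ((ν - i : ℕ) : ℤ) by omega, hZ_natCast,
      show hSym (ν - i) * (pVar i * u) = (pVar i * hSym (ν - i)) * u by ring]
  rw [Finset.sum_congr rfl hR, ← hermFormB_sum_right, ← Finset.sum_mul, ← newton_nat,
    show ((ν : ℤ) + 1) = (((ν + 1 : ℕ)) : ℤ) by omega, hZ_natCast, smul_mul_assoc,
    hermFormB_smul_right]

lemma adj_rec_general (N : ℕ) (c : ℤ) (hc : c ≤ N + 1) (f : SymFun) :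
    ∑ i ∈ Finset.range (N + 1), Dop k i (adj (c - 1 - i) f) = (c : K) • adj c f := by
  by_cases hc0 : c ≤ 0
  · rw [Finset.sum_eq_zero fun i _ => by
      rw [adj_neg hk adj hadj (by omega), Dop_zero]]
    rcases lt_or_eq_of_le hc0 with h | h
    · rw [adj_neg hk adj hadj h, smul_zero]
    · rw [h]; simp
  · push_neg at hc0
    obtain ⟨ν, rfl⟩ : ∃ ν : ℕ, c = (ν : ℤ) + 1 := ⟨(c - 1).toNat, by omega⟩
    have hν : ν ≤ N := by omega
    have h1 : ∑ i ∈ Finset.range (N + 1), Dop k i (adj ((ν : ℤ) + 1 - 1 - i) f)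
        = ∑ i ∈ Finset.range (ν + 1), Dop k i (adj ((ν : ℤ) + 1 - 1 - i) f) := by
      rw [eq_comm]
      refine Finset.sum_subset (Finset.range_subset_range.mpr (by omega)) ?_
      intro i hi hni
      rw [adj_neg hk adj hadj
        (by simp only [Finset.mem_range] at hi hni; omega), Dop_zero]
    have h2 : ∑ i ∈ Finset.range (ν + 1), Dop k i (adj ((ν : ℤ) + 1 - 1 - i) f)
        = ∑ i ∈ Finset.range (ν + 1), Dop k i (adj ((ν : ℤ) - i) f) :=
      Finset.sum_congr rfl fun i hi => by
        rw [show (ν : ℤ) + 1 - 1 - i = (ν : ℤ) - i by ring]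
    rw [h1, h2, ← adj_rec hk adj hadj]
    congr 1

end AdjLemmas

/- ---------- aeval lemmas ---------- -/

lemma aeval_newton_nat (W : ℕ+ → K) (ν : ℕ) :
    ((ν : K) + 1) * aeval W (hSym (ν + 1))
      = ∑ i ∈ Finset.range (ν + 1), W (pIdx i) * aeval W (hSym (ν - i)) := by
  have h := congrArg (aeval W) (newton_nat ν)
  rw [smul_eq_C_mul, map_mul, map_sum, aeval_C] at h
  simp only [Algebra.algebraMap_self_apply] at h
  rw [h]
  exact Finset.sum_congr rfl fun i _ => by rw [map_mul, pVar_eq, aeval_X]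

lemma aeval_newton (w : ℕ+ → K) (N : ℕ) (c : ℤ) (hc : c ≤ N + 1) :
    ∑ i ∈ Finset.range (N + 1), w (pIdx i) * aeval w (hZ (c - 1 - i))
      = (c : K) * aeval w (hZ c) := by
  have h := congrArg (aeval w) (newton_general N c hc)
  rw [smul_eq_C_mul, map_mul, map_sum, aeval_C] at h
  simp only [Algebra.algebraMap_self_apply] at h
  rw [← h]
  exact Finset.sum_congr rfl fun i _ => by rw [map_mul, pVar_eq, aeval_X]

lemma aeval_homog (w : ℕ+ → K) (u : K) (l : ℕ) :
    aeval (fun j : ℕ+ => u ^ (j : ℕ) * w j) (hSym l) = u ^ l * aeval w (hSym l) := by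
  induction l using Nat.strong_induction_on with
  | _ l IH =>
    match l with
    | 0 => rw [hSym_zero, map_one, map_one, pow_zero, one_mul]
    | ν + 1 =>
        have hν : ((ν : K) + 1) ≠ 0 := Nat.cast_add_one_ne_zero ν
        apply mul_left_cancel₀ hν
        rw [aeval_newton_nat]
        have h1 : ∀ i ∈ Finset.range (ν + 1),
            (fun j : ℕ+ => u ^ (j : ℕ) * w j) (pIdx i)
              * aeval (fun j : ℕ+ => u ^ (j : ℕ) * w j) (hSym (ν - i))
            = u ^ (ν + 1) * (w (pIdx i) * aeval w (hSym (ν - i))) := by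
          intro i hi
          have hi' := Finset.mem_range.mp hi
          show u ^ ((pIdx i : ℕ)) * w (pIdx i) * aeval _ (hSym (ν - i)) = _
          rw [IH (ν - i) (by omega),
            show ((pIdx i : ℕ)) = i + 1 from rfl,
            show u ^ (i + 1) * w (pIdx i) * (u ^ (ν - i) * aeval w (hSym (ν - i)))
              = (u ^ (i + 1) * u ^ (ν - i)) * (w (pIdx i) * aeval w (hSym (ν - i))) by ring,
            ← pow_add, show i + 1 + (ν - i) = ν + 1 by omega]
        rw [Finset.sum_congr rfl h1, ← Finset.mul_sum, ← aeval_newton_nat]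
        ring

lemma aeval_add_var (w : ℕ+ → K) (u : K) (l : ℕ) :
    aeval (fun j : ℕ+ => u ^ (j : ℕ) + w j) (hSym l)
      = ∑ j ∈ Finset.range (l + 1), u ^ j * aeval w (hZ ((l : ℤ) - j)) := by
  induction l using Nat.strong_induction_on with
  | _ l IH =>
    match l with
    | 0 =>
        rw [hSym_zero, map_one, Finset.sum_range_one, pow_zero, one_mul,
          show ((0 : ℕ) : ℤ) - ((0 : ℕ) : ℤ) = 0 by ring, hZ_zero, map_one]
    | ν + 1 =>
        have hν : ((ν : K) + 1) ≠ 0 := Nat.cast_add_one_ne_zero ν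
        apply mul_left_cancel₀ hν
        rw [aeval_newton_nat]
        have hpad : ∀ i ∈ Finset.range (ν + 1),
            (fun j : ℕ+ => u ^ (j : ℕ) + w j) (pIdx i)
              * aeval (fun j : ℕ+ => u ^ (j : ℕ) + w j) (hSym (ν - i))
            = (∑ j ∈ Finset.range (ν + 1),
                (u ^ (i + 1) * u ^ j) * aeval w (hZ ((ν : ℤ) - i - j)))
              + w (pIdx i) * ∑ j ∈ Finset.range (ν + 1),
                  u ^ j * aeval w (hZ ((ν : ℤ) - i - j)) := by
          intro i hi
          have hi' := Finset.mem_range.mp hi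
          have e1 : ∑ j ∈ Finset.range (ν + 1), u ^ j * aeval w (hZ ((ν : ℤ) - i - j))
              = ∑ j ∈ Finset.range ((ν - i) + 1), u ^ j * aeval w (hZ ((ν : ℤ) - i - j)) := by
            rw [eq_comm]
            refine Finset.sum_subset (Finset.range_subset_range.mpr (by omega)) ?_
            intro j hj hnj
            rw [hZ_neg (by simp only [Finset.mem_range] at hj hnj; omega), map_zero, mul_zero]
          have e2 : aeval (fun j : ℕ+ => u ^ (j : ℕ) + w j) (hSym (ν - i))
              = ∑ j ∈ Finset.range (ν + 1), u ^ j * aeval w (hZ ((ν : ℤ) - i - j)) := by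
            rw [IH (ν - i) (by omega), e1]
            exact Finset.sum_congr rfl fun j hj => by
              rw [show ((ν - i : ℕ) : ℤ) - j = (ν : ℤ) - i - j by omega]
          rw [e2, show (fun j : ℕ+ => u ^ (j : ℕ) + w j) (pIdx i) = u ^ (i + 1) + w (pIdx i)
            from rfl, add_mul, Finset.mul_sum]
          congr 1
          exact Finset.sum_congr rfl fun j _ => by ring
        rw [Finset.sum_congr rfl hpad, Finset.sum_add_distrib]
        have hS1 : ∑ i ∈ Finset.range (ν + 1), ∑ j ∈ Finset.range (ν + 1),
              (u ^ (i + 1) * u ^ j) * aeval w (hZ ((ν : ℤ) - i - j))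
            = ∑ r ∈ Finset.range (ν + 2), ((r : K) * u ^ r) * aeval w (hZ ((ν : ℤ) + 1 - r)) := by
          have hc := conv (M := K) (fun i j => u ^ (i + 1) * u ^ j) (fun c => aeval w (hZ c)) ν
            (fun c hc => by show aeval w (hZ c) = 0; rw [hZ_neg hc, map_zero])
          simp only [smul_eq_mul] at hc
          rw [hc]
          refine Finset.sum_congr rfl fun r hr => ?_
          congr 1
          rw [Finset.sum_congr rfl (fun i hi => by
            rw [← pow_add, show i + 1 + (r - 1 - i) = r by
              have := Finset.mem_range.mp hi; omega]),
            Finset.sum_const, Finset.card_range, nsmul_eq_mul]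
        have hS2 : ∑ i ∈ Finset.range (ν + 1),
              w (pIdx i) * ∑ j ∈ Finset.range (ν + 1), u ^ j * aeval w (hZ ((ν : ℤ) - i - j))
            = ∑ r ∈ Finset.range (ν + 2),
                u ^ r * ((((ν : ℤ) + 1 - r : ℤ) : K) * aeval w (hZ ((ν : ℤ) + 1 - r))) := by
          have e3 : ∑ i ∈ Finset.range (ν + 1),
                w (pIdx i) * ∑ j ∈ Finset.range (ν + 1), u ^ j * aeval w (hZ ((ν : ℤ) - i - j))
              = ∑ j ∈ Finset.range (ν + 1),
                  u ^ j * ∑ i ∈ Finset.range (ν + 1),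
                    w (pIdx i) * aeval w (hZ (((ν : ℤ) + 1 - j) - 1 - i)) := by
            rw [Finset.sum_congr rfl fun i (_ : i ∈ Finset.range (ν + 1)) =>
              Finset.mul_sum _ _ _]
            rw [Finset.sum_comm]
            refine Finset.sum_congr rfl fun j _ => ?_
            rw [Finset.mul_sum]
            refine Finset.sum_congr rfl fun i _ => ?_
            rw [show ((ν : ℤ) + 1 - j) - 1 - i = (ν : ℤ) - i - j by ring]
            ring
          have e4 : ∀ j ∈ Finset.range (ν + 1),
              u ^ j * ∑ i ∈ Finset.range (ν + 1),
                  w (pIdx i) * aeval w (hZ (((ν : ℤ) + 1 - j) - 1 - i))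
                = u ^ j * ((((ν : ℤ) + 1 - j : ℤ) : K) * aeval w (hZ ((ν : ℤ) + 1 - j))) := by
            intro j hj
            rw [aeval_newton w ν ((ν : ℤ) + 1 - j) (by omega)]
          rw [e3, Finset.sum_congr rfl e4]
          refine Finset.sum_subset (Finset.range_subset_range.mpr (by omega)) ?_
          intro r hr hnr
          have : r = ν + 1 := by
            simp only [Finset.mem_range] at hr hnr; omega
          subst this
          rw [show (ν : ℤ) + 1 - (ν + 1 : ℕ) = 0 by push_cast; ring]
          norm_num
        rw [hS1, hS2, ← Finset.sum_add_distrib]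
        have hfin : ∀ r ∈ Finset.range (ν + 2),
            ((r : K) * u ^ r) * aeval w (hZ ((ν : ℤ) + 1 - r))
              + u ^ r * ((((ν : ℤ) + 1 - r : ℤ) : K) * aeval w (hZ ((ν : ℤ) + 1 - r)))
            = ((ν : K) + 1) * (u ^ r * aeval w (hZ (((ν + 1 : ℕ) : ℤ) - r))) := by
          intro r _
          rw [show (((ν + 1 : ℕ) : ℤ)) - (r : ℤ) = (ν : ℤ) + 1 - r by push_cast; ring]
          have : (((ν : ℤ) + 1 - r : ℤ) : K) = (ν : K) + 1 - r := by push_cast; ring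
          rw [this]
          ring
        rw [Finset.sum_congr rfl hfin, ← Finset.mul_sum]

/- ---------- q-binomial lemmas ---------- -/

def Sb (a : ℤ) : K := tt ^ a - tt ^ (-a)

lemma Sb_ne {a : ℤ} (ha : 1 ≤ a) : Sb a ≠ 0 := Sb_ne_zero ha

lemma principalEval_eq (k : ℕ) (p : SymFun) :
    principalEval k p = aeval (fun j : ℕ+ => aK k (j : ℕ)) p := rfl

lemma Bq_newton (k : ℕ) (r : ℕ) :
    (r : K) * Bq k r = ∑ i ∈ Finset.range r, aK k (i + 1) * Bq k (r - 1 - i) := by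
  match r with
  | 0 => simp
  | ν + 1 =>
      unfold Bq
      rw [principalEval_eq]
      have h := aeval_newton_nat (fun j : ℕ+ => aK k (j : ℕ)) ν
      rw [show ((ν + 1 : ℕ) : K) = (ν : K) + 1 by push_cast; ring, h]
      refine Finset.sum_congr rfl fun i hi => ?_
      rw [show ν + 1 - 1 - i = ν - i by omega]
      rfl

lemma Cq_eq (k l : ℕ) :
    Cq k l = (∏ i ∈ Finset.range l, Sb ((k : ℤ) + i)) / (∏ i ∈ Finset.range l, Sb ((i : ℤ) + 1)) := by
  unfold Cq
  rw [show (∏ i ∈ Finset.range l,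
      (tt ^ ((k : ℤ) + l - (i + 1)) - tt ^ (-((k : ℤ) + l - (i + 1)))) /
        (tt ^ ((i : ℤ) + 1) - tt ^ (-((i : ℤ) + 1))))
    = ∏ i ∈ Finset.range l, (Sb ((k : ℤ) + l - (i + 1)) / Sb ((i : ℤ) + 1)) from rfl]
  rw [Finset.prod_div_distrib]
  congr 1
  rw [← Finset.prod_range_reflect (fun i => Sb ((k : ℤ) + i)) l]
  refine Finset.prod_congr rfl fun i hi => ?_
  have hi' := Finset.mem_range.mp hi
  rw [show ((k : ℤ) + ((l - 1 - i : ℕ) : ℤ)) = (k : ℤ) + l - (i + 1) by omega]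

lemma Dprod_ne (l : ℕ) : (∏ i ∈ Finset.range l, Sb ((i : ℤ) + 1)) ≠ 0 :=
  Finset.prod_ne_zero_iff.mpr fun i _ => Sb_ne (by omega)

lemma Sb_split (k ν : ℕ) :
    Sb ((k : ℤ) + 1 + ν) = tt ^ (-((ν : ℤ) + 1)) * Sb k + tt ^ (k : ℤ) * Sb ((ν : ℤ) + 1) := by
  unfold Sb
  simp only [show ((k : ℤ) + 1 + ν) = (k : ℤ) + (ν + 1) from by ring, neg_add_rev, zpow_neg,
    zpow_add₀ tt_ne_zero, zpow_one]
  field_simp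
  ring

lemma Cq_pascal (k ν : ℕ) :
    Cq (k + 1) (ν + 1)
      = tt ^ (-((ν : ℤ) + 1)) * Cq k (ν + 1) + tt ^ (k : ℤ) * Cq (k + 1) ν := by
  have e1 : ∏ i ∈ Finset.range (ν + 1), Sb (((k + 1 : ℕ) : ℤ) + i)
      = (∏ i ∈ Finset.range ν, Sb (((k + 1 : ℕ) : ℤ) + i)) * Sb ((k : ℤ) + 1 + ν) := by
    rw [Finset.prod_range_succ]
    congr 2 <;> (try push_cast) <;> (try ring)
  have e2 : ∏ i ∈ Finset.range (ν + 1), Sb ((k : ℤ) + i)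
      = Sb (k : ℤ) * ∏ i ∈ Finset.range ν, Sb (((k + 1 : ℕ) : ℤ) + i) := by
    rw [Finset.prod_range_succ']
    rw [show Sb ((k : ℤ) + ((0 : ℕ) : ℤ)) = Sb (k : ℤ) by norm_num, mul_comm]
    congr 1
    refine Finset.prod_congr rfl fun i _ => ?_
    congr 1
    push_cast
    ring
  have e3 : ∏ i ∈ Finset.range (ν + 1), Sb ((i : ℤ) + 1)
      = (∏ i ∈ Finset.range ν, Sb ((i : ℤ) + 1)) * Sb ((ν : ℤ) + 1) := by
    rw [Finset.prod_range_succ]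
  rw [Cq_eq, Cq_eq, Cq_eq, e1, e2, e3, Sb_split]
  have h1 := Dprod_ne ν
  have h2 : Sb ((ν : ℤ) + 1) ≠ 0 := Sb_ne (by omega)
  field_simp

lemma Cq_zero (k : ℕ) : Cq k 0 = 1 := by
  unfold Cq
  rw [Finset.prod_range_zero]

lemma Cq_rec (k : ℕ) (l : ℕ) :
    Cq (k + 1) l
      = ∑ j ∈ Finset.range (l + 1),
          (tt ^ (k : ℤ)) ^ j * ((tt⁻¹) ^ (l - j) * Cq k (l - j)) := by
  induction l with
  | zero => simp [Cq_zero]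
  | succ ν IH =>
      have hA : tt ^ ((k : ℤ)) * ∑ j ∈ Finset.range (ν + 1),
            (tt ^ (k : ℤ)) ^ j * ((tt⁻¹) ^ (ν - j) * Cq k (ν - j))
          = ∑ j ∈ Finset.range (ν + 1),
            (tt ^ (k : ℤ)) ^ (j + 1) * ((tt⁻¹) ^ (ν + 1 - (j + 1)) * Cq k (ν + 1 - (j + 1))) := by
        rw [Finset.mul_sum]
        refine Finset.sum_congr rfl fun j hj => ?_
        rw [show ν + 1 - (j + 1) = ν - j by omega, pow_succ]
        ring
      have hB : tt ^ (-((ν : ℤ) + 1)) * Cq k (ν + 1)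
          = (tt ^ (k : ℤ)) ^ 0 * ((tt⁻¹) ^ (ν + 1 - 0) * Cq k (ν + 1 - 0)) := by
        rw [pow_zero, one_mul, Nat.sub_zero, inv_pow, ← zpow_natCast tt (ν + 1), ← zpow_neg]
        congr 2 <;> (try push_cast) <;> (try ring)
      rw [Cq_pascal, IH, Finset.sum_range_succ' _ (ν + 1), hA, hB, add_comm]

lemma aeval_one_const (l : ℕ) : aeval (fun _ : ℕ+ => (1 : K)) (hSym l) = 1 := by
  induction l using Nat.strong_induction_on with
  | _ l IH =>
    match l with
    | 0 => rw [hSym_zero, map_one]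
    | ν + 1 =>
        have hν : ((ν : K) + 1) ≠ 0 := Nat.cast_add_one_ne_zero ν
        apply mul_left_cancel₀ hν
        rw [aeval_newton_nat]
        rw [Finset.sum_congr rfl (fun i (hi : i ∈ Finset.range (ν + 1)) => by
          rw [IH (ν - i) (by have := Finset.mem_range.mp hi; omega)])]
        simp

lemma aK_one (j : ℕ) : aK 1 j = 1 := by
  unfold aK
  rw [Finset.sum_range_one]
  norm_num

lemma aK_succ (k j : ℕ) : aK (k + 1) j = (tt ^ (k : ℤ)) ^ j + (tt⁻¹) ^ j * aK k j := by
  unfold aK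
  rw [Finset.sum_range_succ]
  have h1 : tt ^ ((2 * ((k : ℕ) : ℤ) + 1 - ((k + 1 : ℕ) : ℤ)) * (j : ℤ)) = (tt ^ (k : ℤ)) ^ j := by
    rw [← zpow_natCast (tt ^ (k : ℤ)) j, ← zpow_mul]
    congr 1
    push_cast
    ring
  have h2 : ∑ s ∈ Finset.range k, tt ^ ((2 * (s : ℤ) + 1 - ((k + 1 : ℕ) : ℤ)) * (j : ℤ))
      = (tt⁻¹) ^ j * ∑ s ∈ Finset.range k, tt ^ ((2 * (s : ℤ) + 1 - ((k : ℕ) : ℤ)) * (j : ℤ)) := by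
    rw [Finset.mul_sum (Finset.range k) _ ((tt⁻¹) ^ j)]
    refine Finset.sum_congr rfl fun s hs => ?_
    rw [inv_pow, ← zpow_natCast tt j, ← zpow_neg, ← zpow_add₀ tt_ne_zero]
    congr 1
    push_cast
    ring
  rw [h1, h2, add_comm]

lemma Bq_rec (k : ℕ) (l : ℕ) :
    Bq (k + 1) l
      = ∑ j ∈ Finset.range (l + 1),
          (tt ^ (k : ℤ)) ^ j * ((tt⁻¹) ^ (l - j) * Bq k (l - j)) := by
  unfold Bq
  rw [principalEval_eq]
  have hw : (fun j : ℕ+ => aK (k + 1) (j : ℕ))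
      = fun j : ℕ+ => (tt ^ (k : ℤ)) ^ ((j : ℕ)) +
          (fun j' : ℕ+ => (tt⁻¹) ^ ((j' : ℕ)) * aK k ((j' : ℕ))) j := by
    funext j
    rw [aK_succ]
  rw [hw, aeval_add_var]
  refine Finset.sum_congr rfl fun j hj => ?_
  have hj' := Finset.mem_range.mp hj
  rw [show ((l : ℤ) - j) = ((l - j : ℕ) : ℤ) by omega, hZ_natCast, aeval_homog, principalEval_eq]

lemma Bq_eq_Cq {k : ℕ} (hk : 1 ≤ k) (l : ℕ) : Bq k l = Cq k l := by
  induction k, hk using Nat.le_induction generalizing l with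
  | base =>
      have hone : (fun j : ℕ+ => aK 1 (j : ℕ)) = (fun _ : ℕ+ => (1 : K)) := by
        funext j; rw [aK_one]
      rw [show Bq 1 l = aeval (fun _ : ℕ+ => (1 : K)) (hSym l) by
          unfold Bq; rw [principalEval_eq, hone],
        aeval_one_const, Cq_eq]
      rw [show (∏ i ∈ Finset.range l, Sb (((1 : ℕ) : ℤ) + i))
          = ∏ i ∈ Finset.range l, Sb ((i : ℤ) + 1) from
        Finset.prod_congr rfl fun i _ => by congr 1; push_cast; ring]
      rw [div_self (Dprod_ne l)]
  | succ k hk IH =>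
      rw [Bq_rec, Cq_rec]
      exact Finset.sum_congr rfl fun j _ => by rw [IH]

end Stmt17

open Stmt17

set_option maxHeartbeats 1600000 in
/-- Let `p^{(j)}` be multiplication by `h_j = s_{(j)}` and
`q^{(j)}` (here `adj j`) its adjoint with respect to the form `⟨·,·⟩_k`.  Then
`q^{(n)} ∘ p^{(m)} = ∑_{l ≥ 0} binom(k+l-1,l)_t ⬝ p^{(m-l)} ∘ q^{(n-l)}`, where
`binom(k+l-1,l)_t = ∏_{i=1}^l (t^{k+l-i} - t^{-(k+l-i)})/(t^i - t^{-i})` is the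
balanced quantum binomial, with `p^{(j)} = q^{(j)} = 0` for `j < 0`.
(Terms with `l > min m n` vanish, so the sum is truncated.) -/
theorem balanced_commutation_relation (k : ℕ) (hk : 1 ≤ k) (m n : ℕ)
    (adj : ℤ → SymFun →ₗ[K] SymFun)
    (hadj : ∀ (j : ℤ) (g h : SymFun),
      hermFormB k (adj j g) h = hermFormB k g (hZ j * h)) :
    ∀ f : SymFun,
      adj n (hSym m * f)
        = ∑ l ∈ Finset.range (min m n + 1),
            (∏ i ∈ Finset.range l,
              (tt ^ ((k : ℤ) + l - (i + 1)) - tt ^ (-((k : ℤ) + l - (i + 1)))) /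
                (tt ^ ((i : ℤ) + 1) - tt ^ (-((i : ℤ) + 1)))) •
              (hZ ((m : ℤ) - l) * adj ((n : ℤ) - l) f) := by
  have main : ∀ n' : ℕ, ∀ (m' : ℕ) (f' : SymFun),
      adj (n' : ℤ) (hSym m' * f')
        = ∑ l ∈ Finset.range (n' + 1),
            Bq k l • (hZ ((m' : ℤ) - l) * adj ((n' : ℤ) - l) f') := by
    intro n'
    induction n' using Nat.strong_induction_on with
    | _ n' IH =>
      intro m' f'
      match n' with
      | 0 =>
          rw [Finset.sum_range_one]
          simp only [Nat.cast_zero, sub_zero]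
          rw [adj_zero hk adj hadj, adj_zero hk adj hadj, hZ_natCast,
            show Bq k 0 = 1 from by unfold Bq; rw [hSym_zero, map_one], one_smul]
      | ν + 1 =>
          have hν : ((ν : K) + 1) ≠ 0 := Nat.cast_add_one_ne_zero ν
          have hIH : ∀ i ∈ Finset.range (ν + 1),
              adj ((ν : ℤ) - i) (hSym m' * f')
                = ∑ l ∈ Finset.range (ν + 1),
                    Bq k l • (hZ ((m' : ℤ) - l) * adj ((ν : ℤ) - i - l) f') := by
            intro i hi
            have hi' := Finset.mem_range.mp hi
            rw [show ((ν : ℤ) - i) = ((ν - i : ℕ) : ℤ) by omega, IH (ν - i) (by omega) m' f']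
            apply Finset.sum_subset
              (Finset.range_subset_range.mpr (show ν - i + 1 ≤ ν + 1 by omega))
            intro l hl hnl
            rw [adj_neg hk adj hadj (c := ((ν - i : ℕ) : ℤ) - l)
              (by simp only [Finset.mem_range] at hl hnl; omega), mul_zero, smul_zero]
          have step1a : ∀ i ∈ Finset.range (ν + 1),
              Dop k i (adj ((ν : ℤ) - i) (hSym m' * f'))
                = ∑ l ∈ Finset.range (ν + 1),
                    (Bq k l • (hZ ((m' : ℤ) - l) * Dop k i (adj ((ν : ℤ) - i - l) f'))
                     + (aK k (i + 1) * Bq k l) •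
                        (hZ ((m' : ℤ) - ν - 1 + ((ν : ℤ) - i - l))
                          * adj ((ν : ℤ) - i - l) f')) := by
            intro i hi
            rw [hIH i hi, Dop_sum]
            refine Finset.sum_congr rfl fun l hl => ?_
            rw [Dop_smul, Dop_mul_hZ, smul_add, smul_smul,
              show ((m' : ℤ) - l - ((i : ℤ) + 1)) = (m' : ℤ) - ν - 1 + ((ν : ℤ) - i - l)
                by ring, mul_comm (Bq k l) (aK k (i + 1))]
          have step1 : ((ν : K) + 1) • adj (((ν + 1 : ℕ) : ℤ)) (hSym m' * f')
              = (∑ i ∈ Finset.range (ν + 1), ∑ l ∈ Finset.range (ν + 1),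
                  Bq k l • (hZ ((m' : ℤ) - l) * Dop k i (adj ((ν : ℤ) - i - l) f')))
                + ∑ i ∈ Finset.range (ν + 1), ∑ l ∈ Finset.range (ν + 1),
                    (aK k (i + 1) * Bq k l) •
                      (hZ ((m' : ℤ) - ν - 1 + ((ν : ℤ) - i - l)) * adj ((ν : ℤ) - i - l) f') := by
            rw [show (((ν + 1 : ℕ) : ℤ)) = (ν : ℤ) + 1 by push_cast; ring,
              adj_rec hk adj hadj ν, Finset.sum_congr rfl step1a, ← Finset.sum_add_distrib]
            exact Finset.sum_congr rfl fun i _ => Finset.sum_add_distrib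
          have step2 : ∑ i ∈ Finset.range (ν + 1), ∑ l ∈ Finset.range (ν + 1),
                Bq k l • (hZ ((m' : ℤ) - l) * Dop k i (adj ((ν : ℤ) - i - l) f'))
              = ∑ l ∈ Finset.range (ν + 1),
                  (Bq k l * ((((ν : ℤ) + 1 - l : ℤ)) : K)) •
                    (hZ ((m' : ℤ) - l) * adj ((ν : ℤ) + 1 - l) f') := by
            rw [Finset.sum_comm]
            refine Finset.sum_congr rfl fun l hl => ?_
            have e1 : ∀ i ∈ Finset.range (ν + 1),
                Bq k l • (hZ ((m' : ℤ) - l) * Dop k i (adj ((ν : ℤ) - i - l) f'))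
                  = Bq k l • (hZ ((m' : ℤ) - l)
                      * Dop k i (adj (((ν : ℤ) + 1 - l) - 1 - i) f')) := by
              intro i _
              rw [show ((ν : ℤ) + 1 - l) - 1 - i = (ν : ℤ) - i - l by ring]
            rw [Finset.sum_congr rfl e1, ← Finset.smul_sum, ← Finset.mul_sum,
              adj_rec_general hk adj hadj ν ((ν : ℤ) + 1 - l) (by omega) f',
              mul_smul_comm, smul_smul]
          have step3 : ∑ i ∈ Finset.range (ν + 1), ∑ l ∈ Finset.range (ν + 1),
                (aK k (i + 1) * Bq k l) •
                  (hZ ((m' : ℤ) - ν - 1 + ((ν : ℤ) - i - l)) * adj ((ν : ℤ) - i - l) f')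
              = ∑ r ∈ Finset.range (ν + 2),
                  ((r : K) * Bq k r) • (hZ ((m' : ℤ) - r) * adj ((ν : ℤ) + 1 - r) f') := by
            have hc := conv (M := SymFun) (fun i l => aK k (i + 1) * Bq k l)
              (fun c => hZ ((m' : ℤ) - ν - 1 + c) * adj c f') ν
              (fun c hcneg => by
                show hZ ((m' : ℤ) - ν - 1 + c) * adj c f' = 0
                rw [adj_neg hk adj hadj hcneg, mul_zero])
            rw [hc]
            refine Finset.sum_congr rfl fun r hr => ?_
            rw [← Bq_newton k r,
              show ((m' : ℤ) - ν - 1 + ((ν : ℤ) + 1 - r)) = (m' : ℤ) - r by ring]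
          refine smul_right_injective SymFun hν ?_
          dsimp only
          rw [step1, step2, step3]
          have pad : ∑ l ∈ Finset.range (ν + 1),
                (Bq k l * ((((ν : ℤ) + 1 - l : ℤ)) : K)) •
                  (hZ ((m' : ℤ) - l) * adj ((ν : ℤ) + 1 - l) f')
              = ∑ l ∈ Finset.range (ν + 2),
                  (Bq k l * ((((ν : ℤ) + 1 - l : ℤ)) : K)) •
                    (hZ ((m' : ℤ) - l) * adj ((ν : ℤ) + 1 - l) f') := by
            refine Finset.sum_subset (Finset.range_subset_range.mpr (by omega)) ?_
            intro l hl hnl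
            have : l = ν + 1 := by simp only [Finset.mem_range] at hl hnl; omega
            subst this
            rw [show ((ν : ℤ) + 1 - ((ν + 1 : ℕ) : ℤ)) = 0 by push_cast; ring]
            rw [Int.cast_zero, mul_zero, zero_smul]
          rw [pad, ← Finset.sum_add_distrib]
          have combine : ∀ l ∈ Finset.range (ν + 2),
              (Bq k l * ((((ν : ℤ) + 1 - l : ℤ)) : K)) •
                  (hZ ((m' : ℤ) - l) * adj ((ν : ℤ) + 1 - l) f')
                + ((l : K) * Bq k l) • (hZ ((m' : ℤ) - l) * adj ((ν : ℤ) + 1 - l) f')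
              = ((ν : K) + 1) •
                  (Bq k l • (hZ ((m' : ℤ) - l) * adj (((ν + 1 : ℕ) : ℤ) - l) f')) := by
            intro l _
            rw [show (((ν + 1 : ℕ) : ℤ) - l) = (ν : ℤ) + 1 - l by push_cast; ring,
              ← add_smul, smul_smul]
            congr 1
            push_cast
            ring
          rw [Finset.sum_congr rfl combine, ← Finset.smul_sum]
  intro f
  have h1 := main n m f
  have h2 : ∑ l ∈ Finset.range (n + 1), Bq k l • (hZ ((m : ℤ) - l) * adj ((n : ℤ) - l) f)
      = ∑ l ∈ Finset.range (min m n + 1), Cq k l • (hZ ((m : ℤ) - l) * adj ((n : ℤ) - l) f) := by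
    rw [Finset.sum_congr rfl (fun l (_ : l ∈ Finset.range (n + 1)) => by
      rw [Bq_eq_Cq hk])]
    rw [eq_comm]
    refine Finset.sum_subset (Finset.range_subset_range.mpr (by omega)) ?_
    intro l hl hnl
    simp only [Finset.mem_range] at hl hnl
    rw [hZ_neg (by omega), zero_mul, smul_zero]
  show adj (n : ℤ) (hSym m * f)
      = ∑ l ∈ Finset.range (min m n + 1), Cq k l • (hZ ((m : ℤ) - l) * adj ((n : ℤ) - l) f)
  rw [h1, h2]

end
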